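/- Let G be a 2-connected graph whose longest cycle has length at most k. Then every path in G has fewer than k² vertices. -/

import Mathlib

open SimpleGraph Set

/-- The monochromatic subgraph of `G` under colouring `C`. -/
def monoSubgraph {V α : Type*} (G : SimpleGraph V) (C : V → α) : SimpleGraph V where
  Adj a b := G.Adj a b ∧ C a = C b
  symm := ⟨fun _ _ h => ⟨h.1.symm, h.2.symm⟩⟩
  loopless := ⟨fun a h => G.ne_of_adj h.1 rfl⟩

/-- The colouring `C` of `G` has defect at most `d`: every monochromatic component has
maximum degree at most `d` (equivalently, every vertex has at most `d` neighbours of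
its own colour). -/
def HasDefect {V α : Type*} (G : SimpleGraph V) (C : V → α) (d : ℕ) : Prop :=
  ∀ v, {w | G.Adj v w ∧ C w = C v}.ncard ≤ d

/-- The colouring `C` of `G` has clustering at most `c`: every monochromatic component
has at most `c` vertices. -/
def HasClustering {V α : Type*} (G : SimpleGraph V) (C : V → α) (c : ℕ) : Prop :=
  ∀ v, {w | (monoSubgraph G C).Reachable v w}.ncard ≤ c

/-- Feedback vertex number at most `k`. -/
def FvnLE {V : Type*} (G : SimpleGraph V) (k : ℕ) : Prop :=
  ∃ A : Set V, A.Finite ∧ A.ncard ≤ k ∧ (G.induce Aᶜ).IsAcyclic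

/-- `H` is a minor of `G`, via branch sets. -/
def IsMinorOf {W V : Type*} (H : SimpleGraph W) (G : SimpleGraph V) : Prop :=
  ∃ B : W → Set V,
    (∀ w, (B w).Nonempty) ∧
    (Pairwise fun w w' => Disjoint (B w) (B w')) ∧
    (∀ w, (G.induce (B w)).Connected) ∧
    (∀ w w', H.Adj w w' → ∃ a ∈ B w, ∃ b ∈ B w', G.Adj a b)

/-- Treedepth at most `k`: there is a forest (ancestor) partial order `r` of height
at most `k` such that the endpoints of every edge are comparable. -/
def TreedepthLE {V : Type*} (G : SimpleGraph V) (k : ℕ) : Prop :=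
  ∃ r : V → V → Prop,
    (∀ v, r v v) ∧
    (∀ a b c, r a b → r b c → r a c) ∧
    (∀ a b, r a b → r b a → a = b) ∧
    (∀ v a b, r a v → r b v → r a b ∨ r b a) ∧
    (∀ v, {u | r u v}.Finite ∧ {u | r u v}.ncard ≤ k) ∧
    (∀ a b, G.Adj a b → r a b ∨ r b a)

/-- Pathwidth at most `k`, via path decompositions. -/
def PathwidthLE {V : Type*} (G : SimpleGraph V) (k : ℕ) : Prop :=
  ∃ (n : ℕ) (B : Fin n → Set V),
    (∀ v, ∃ i, v ∈ B i) ∧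
    (∀ a b, G.Adj a b → ∃ i, a ∈ B i ∧ b ∈ B i) ∧
    (∀ i j l : Fin n, i ≤ j → j ≤ l → ∀ v, v ∈ B i → v ∈ B l → v ∈ B j) ∧
    (∀ i, (B i).ncard ≤ k + 1)

/-- `w` is 2-reachable from `v` with respect to the order `r`. -/
def TwoReach {V : Type*} (G : SimpleGraph V) (r : V → V → Prop) (v w : V) : Prop :=
  w = v ∨ (r w v ∧ (G.Adj v w ∨ ∃ u, r v u ∧ u ≠ v ∧ G.Adj v u ∧ G.Adj u w))

/-- The 2-strong colouring number `col₂(G)`. -/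
noncomputable def col2 {V : Type*} (G : SimpleGraph V) : ℕ :=
  sInf {m | ∃ r : V → V → Prop, IsLinearOrder V r ∧ ∀ v, {w | TwoReach G r v w}.ncard ≤ m}

/-- `G` contains a complete bipartite subgraph `K_{s,t}`. -/
def HasKstSubgraph {V : Type*} (G : SimpleGraph V) (s t : ℕ) : Prop :=
  ∃ (A B : Finset V), Disjoint A B ∧ A.card = s ∧ B.card = t ∧
    ∀ a ∈ A, ∀ b ∈ B, G.Adj a b

/-- `x` is a prefix of `y`, as nodes of the complete `d`-ary tree of height `n`. -/
def SeqPrefix {n d : ℕ} (x y : Σ i : Fin n, Fin (i : ℕ) → Fin d) : Prop :=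
  ∃ h : (x.1 : ℕ) ≤ (y.1 : ℕ), ∀ a : Fin (x.1 : ℕ), y.2 (Fin.castLE h a) = x.2 a

/-- The graph `H^(d)`, on the nodes of the complete `d`-ary tree of height `n`:
on each root–leaf path `(x_1, …, x_n)`, `x_i x_j` is an edge iff `v_i v_j ∈ E(H)`. -/
def HdGraph (n d : ℕ) (H : SimpleGraph (Fin n)) :
    SimpleGraph (Σ i : Fin n, Fin (i : ℕ) → Fin d) where
  Adj x y := H.Adj x.1 y.1 ∧ (SeqPrefix x y ∨ SeqPrefix y x)
  symm := ⟨fun _ _ h => ⟨h.1.symm, h.2.symm⟩⟩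
  loopless := ⟨fun x h => H.ne_of_adj h.1 rfl⟩

/-- Planarity, via Wagner's characterisation: no `K₅` minor and no `K_{3,3}` minor. -/
def IsPlanarWagner {V : Type*} (G : SimpleGraph V) : Prop :=
  ¬ IsMinorOf (⊤ : SimpleGraph (Fin 5)) G ∧
  ¬ IsMinorOf (completeBipartiteGraph (Fin 3) (Fin 3)) G

/-- The independence number. -/
noncomputable def indepNum {V : Type*} (H : SimpleGraph V) : ℕ :=
  sSup {m | ∃ s : Finset V, s.card = m ∧ ∀ a ∈ s, ∀ b ∈ s, a ≠ b → ¬ H.Adj a b}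

namespace DiracAux
open SimpleGraph Walk

variable {V : Type*} {G : SimpleGraph V}

lemma end_mem_tail {a b : V} (p : G.Walk a b) (h : p.length ≠ 0) :
    b ∈ p.support.tail := by
  cases p with
  | nil => simp at h
  | cons h' q => simpa using q.end_mem_support

lemma path_loop_length {a : V} {p : G.Walk a a} (hp : p.IsPath) : p.length = 0 := by
  rw [Walk.isPath_iff_eq_nil] at hp
  simp [hp]

lemma firstHit (L : List V) :
    ∀ {a c : V} (W : G.Walk a c), c ∈ L →
    ∃ (x : V) (_ : x ∈ L) (W1 : G.Walk a x) (W2 : G.Walk x c),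
      W1.append W2 = W ∧ ∀ y ∈ W1.support, y ∈ L → y = x := by
  intro a c W
  induction W with
  | nil => intro hc; exact ⟨_, hc, Walk.nil, Walk.nil, rfl, by simp⟩
  | @cons a b c h W' ih =>
    intro hc
    by_cases ha : a ∈ L
    · exact ⟨a, ha, Walk.nil, Walk.cons h W', rfl, by simp⟩
    · obtain ⟨x, hx, W1, W2, hap, hfirst⟩ := ih hc
      refine ⟨x, hx, Walk.cons h W1, W2, by simp [hap], ?_⟩
      intro y hy hyL
      rcases List.mem_cons.mp (by simpa using hy) with rfl | hy'
      · exact absurd hyL ha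
      · exact hfirst y hy' hyL

lemma append_isPath {a b c : V} {p : G.Walk a b} {q : G.Walk b c}
    (hp : p.IsPath) (hq : q.IsPath)
    (hint : ∀ y ∈ p.support, y ∈ q.support → y = b) :
    (p.append q).IsPath := by
  rw [Walk.isPath_def, Walk.support_append]
  refine List.Nodup.append hp.support_nodup hq.support_nodup.tail ?_
  intro y hyp hyq
  have hyb : y = b := hint y hyp (List.mem_of_mem_tail hyq)
  subst hyb
  have hnd := hq.support_nodup
  rw [Walk.support_eq_cons] at hnd
  exact (List.nodup_cons.mp hnd).1 hyq

lemma arc_paths [DecidableEq V] {x w : V} {C : G.Walk x x} (hC : C.IsCycle)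
    (hw : w ∈ C.support) (hxw : w ≠ x) :
    (C.takeUntil w hw).IsPath ∧ (C.dropUntil w hw).IsPath := by
  have hspec := C.take_spec hw
  set A1 := C.takeUntil w hw with hA1def
  set A2 := C.dropUntil w hw with hA2def
  have htail : C.support.tail = A1.support.tail ++ A2.support.tail := by
    rw [← hspec, Walk.tail_support_append]
  have hnd := hC.support_nodup
  rw [htail] at hnd
  obtain ⟨h1, h2, hdis⟩ := List.nodup_append.mp hnd
  have hA2len : A2.length ≠ 0 := fun h => hxw (Walk.eq_of_length_eq_zero h)
  have hxA2 : x ∈ A2.support.tail := end_mem_tail _ hA2len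
  have hA1len : A1.length ≠ 0 := fun h => hxw (Walk.eq_of_length_eq_zero h).symm
  have hwA1 : w ∈ A1.support.tail := end_mem_tail _ hA1len
  constructor
  · apply Walk.IsPath.mk'
    rw [Walk.support_eq_cons]
    exact List.nodup_cons.mpr ⟨fun hmem => hdis x hmem x hxA2 rfl, h1⟩
  · apply Walk.IsPath.mk'
    rw [Walk.support_eq_cons]
    exact List.nodup_cons.mpr ⟨fun hmem => hdis w hwA1 w hmem rfl, h2⟩

lemma mem_support_iff_tail {c : V} {C : G.Walk c c} (h : C.length ≠ 0) (y : V) :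
    y ∈ C.support ↔ y ∈ C.support.tail := by
  constructor
  · intro hy
    rcases (Walk.mem_support_iff C).mp hy with rfl | h'
    · exact end_mem_tail _ h
    · exact h'
  · exact fun hy => List.mem_of_mem_tail hy

lemma mem_rotate [DecidableEq V] {c x : V} {C : G.Walk c c} (hC : C.IsCycle) (hx : x ∈ C.support)
    (y : V) : y ∈ (C.rotate x hx).support ↔ y ∈ C.support := by
  have h0 : C.length ≠ 0 := by have := hC.three_le_length; omega
  have h0' : (C.rotate x hx).length ≠ 0 := by
    have := (hC.rotate hx).three_le_length; omega
  rw [mem_support_iff_tail h0', mem_support_iff_tail h0]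
  exact (Walk.support_rotate C x hx).perm.mem_iff

lemma avoid_walk (h2conn : ∀ v : V, (G.induce {v}ᶜ).Connected)
    {a b w : V} (ha : a ≠ w) (hb : b ≠ w) :
    ∃ W : G.Walk a b, W.IsPath ∧ w ∉ W.support := by
  classical
  have hA : a ∈ ({w}ᶜ : Set V) := by simpa using ha
  have hB : b ∈ ({w}ᶜ : Set V) := by simpa using hb
  obtain ⟨W0⟩ := (h2conn w).preconnected ⟨a, hA⟩ ⟨b, hB⟩
  let f : G.induce ({w}ᶜ : Set V) →g G := (SimpleGraph.Embedding.induce _).toHom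
  have hinj : Function.Injective (f : ({w}ᶜ : Set V) → V) := Subtype.val_injective
  refine ⟨W0.bypass.map f, Walk.map_isPath_of_injective hinj W0.bypass_isPath, ?_⟩
  intro hmem
  replace hmem : w ∈ (W0.bypass.map f).support := hmem
  rw [Walk.support_map] at hmem
  obtain ⟨y, _, hyw⟩ := List.mem_map.mp hmem
  exact y.2 (by simpa [f] using hyw)

lemma other_nbr [Fintype V] (h3 : 3 ≤ Fintype.card V)
    (h2conn : ∀ v : V, (G.induce {v}ᶜ).Connected)
    {u v : V} (h : G.Adj u v) : ∃ w, G.Adj u w ∧ w ≠ v := by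
  classical
  have hz : ∃ z : V, z ∉ ({u, v} : Finset V) := by
    by_contra hcon
    push_neg at hcon
    have hsub : (Finset.univ : Finset V) ⊆ {u, v} := fun z _ => hcon z
    have := Finset.card_le_card hsub
    have h2 : ({u, v} : Finset V).card ≤ 2 :=
      le_trans (Finset.card_insert_le _ _) (by simp)
    simp [Finset.card_univ] at this
    omega
  obtain ⟨z, hz⟩ := hz
  simp only [Finset.mem_insert, Finset.mem_singleton, not_or] at hz
  have hu : u ∈ ({v}ᶜ : Set V) := by simpa using h.ne
  have hzv : z ∈ ({v}ᶜ : Set V) := by simpa using hz.2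
  obtain ⟨W0⟩ := (h2conn v).preconnected ⟨u, hu⟩ ⟨z, hzv⟩
  have hne : (⟨u, hu⟩ : ({v}ᶜ : Set V)) ≠ ⟨z, hzv⟩ := by
    simp [Subtype.ext_iff]
    exact Ne.symm hz.1
  obtain ⟨x, hadj, _, _⟩ := Walk.exists_eq_cons_of_ne hne W0
  have hx2 := x.2
  simp only [Set.mem_compl_iff, Set.mem_singleton_iff] at hx2
  exact ⟨x.1, hadj, hx2⟩

lemma cycle_adj [Fintype V] (h3 : 3 ≤ Fintype.card V)
    (h2conn : ∀ v : V, (G.induce {v}ᶜ).Connected)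
    {u v : V} (h : G.Adj u v) :
    ∃ C : G.Walk v v, C.IsCycle ∧ u ∈ C.support := by
  obtain ⟨w, huw, hwv⟩ := other_nbr h3 h2conn h
  obtain ⟨p, hp, hup⟩ := avoid_walk h2conn huw.ne' h.ne'
  refine ⟨Walk.cons h.symm (Walk.cons huw p), ?_, by simp⟩
  rw [Walk.cons_isCycle_iff]
  constructor
  · exact (Walk.cons_isPath_iff _ _).mpr ⟨hp, hup⟩
  · intro hmem
    rw [Walk.edges_cons, List.mem_cons] at hmem
    rcases hmem with heq | hmem
    · rw [Sym2.eq_iff] at heq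
      rcases heq with ⟨h1, h2⟩ | ⟨h1, h2⟩
      · exact h.ne' h1
      · exact hwv h1.symm
    · exact hup (Walk.snd_mem_support_of_mem_edges p hmem)


lemma cycle_two [Fintype V] (h3 : 3 ≤ Fintype.card V)
    (h2conn : ∀ v : V, (G.induce {v}ᶜ).Connected) :
    ∀ (n : ℕ) (u v : V) (p : G.Walk u v), p.length ≤ n → u ≠ v →
      ∃ (c : V) (C : G.Walk c c), C.IsCycle ∧ u ∈ C.support ∧ v ∈ C.support := by
  intro n
  induction n with
  | zero =>
    intro u v p hl hne
    exact absurd (Walk.eq_of_length_eq_zero (Nat.le_zero.mp hl)) hne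
  | succ n ih =>
    intro u v p hl hne
    classical
    by_cases hadj : G.Adj u v
    · obtain ⟨C, hC, hu⟩ := cycle_adj h3 h2conn hadj
      exact ⟨v, C, hC, hu, C.start_mem_support⟩
    set q := p.bypass with hqdef
    have hqp : q.IsPath := p.bypass_isPath
    have hql : q.length ≤ n + 1 := le_trans p.length_bypass_le hl
    obtain ⟨w, hvw, r, hr⟩ := Walk.exists_eq_cons_of_ne hne.symm q.reverse
    have hwu : w ≠ u := by
      intro h
      subst h
      exact hadj hvw.symm
    have hrpath : (Walk.cons hvw r).IsPath := by rw [← hr]; exact hqp.reverse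
    rw [Walk.cons_isPath_iff] at hrpath
    obtain ⟨hrp, hvr⟩ := hrpath
    have hrl : r.length ≤ n := by
      have : q.reverse.length = r.length + 1 := by rw [hr]; simp
      rw [Walk.length_reverse] at this
      omega
    obtain ⟨c, C, hC, hwC, huC⟩ := by
      refine ih w u r ?_ hwu
      simpa using hrl
    -- we have a cycle through u and w; w adjacent to v
    by_cases hvC : v ∈ C.support
    · exact ⟨c, C, hC, huC, hvC⟩
    have hvw' : v ≠ w := hvw.ne
    obtain ⟨W, hW, hwW⟩ := avoid_walk h2conn hvw' (Ne.symm hwu)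
    obtain ⟨x, hxC, W1, W2, happ, hfirst⟩ := firstHit C.support W huC
    have hWW : (W1.append W2).IsPath := by rw [happ]; exact hW
    have hW1 : W1.IsPath := hWW.of_append_left
    have hwW1 : w ∉ W1.support := fun hmem =>
      hwW (by rw [← happ]; exact Walk.subset_support_append_left _ _ hmem)
    have hxw : x ≠ w := by
      intro h; subst h
      exact hwW1 W1.end_mem_support
    set C' := C.rotate x hxC with hC'def
    have hC' : C'.IsCycle := hC.rotate hxC
    have memC' : ∀ y, y ∈ C'.support ↔ y ∈ C.support := mem_rotate hC hxC
    have hwC' : w ∈ C'.support := (memC' w).mpr hwC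
    obtain ⟨hA1, hA2⟩ := arc_paths hC' hwC' (Ne.symm hxw)
    set A1 := C'.takeUntil w hwC' with hA1def
    set A2 := C'.dropUntil w hwC' with hA2def
    have hcover : u ∈ A1.support ∨ u ∈ A2.support := by
      have hu' : u ∈ C'.support := (memC' u).mpr huC
      rw [← C'.take_spec hwC'] at hu'
      exact (Walk.mem_support_append_iff _ _).mp hu'
    have hBex : ∃ B : G.Walk x w, B.IsPath ∧ u ∈ B.support ∧
        ∀ y ∈ B.support, y ∈ C.support := by
      rcases hcover with h1 | h2
      · exact ⟨A1, hA1, h1, fun y hy =>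
          (memC' y).mp (Walk.support_takeUntil_subset _ _ hy)⟩
      · refine ⟨A2.reverse, hA2.reverse, ?_, fun y hy => (memC' y).mp
          (Walk.support_dropUntil_subset _ _ (by rwa [Walk.support_reverse, List.mem_reverse] at hy))⟩
        rw [Walk.support_reverse, List.mem_reverse]
        exact h2
    obtain ⟨B, hB, huB, hBC⟩ := hBex
    have hT : (W1.append B).IsPath := by
      refine append_isPath hW1 hB ?_
      intro y hy1 hy2
      exact hfirst y hy1 (hBC y hy2)
    refine ⟨w, Walk.cons hvw.symm (W1.append B), ?_, ?_, ?_⟩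
    · rw [Walk.cons_isCycle_iff]
      refine ⟨hT, ?_⟩
      intro hmem
      rw [Walk.edges_append, List.mem_append] at hmem
      rcases hmem with hmem | hmem
      · exact hwW1 (Walk.fst_mem_support_of_mem_edges W1 hmem)
      · exact hvC (hBC v (Walk.snd_mem_support_of_mem_edges B hmem))
    · rw [Walk.support_cons, List.mem_cons]
      exact Or.inr (Walk.subset_support_append_right _ _ huB)
    · rw [Walk.support_cons, List.mem_cons]
      exact Or.inr (Walk.subset_support_append_left _ _ W1.start_mem_support)

lemma segment_bound (k : ℕ) (hk : 2 ≤ k)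
    (hcirc : ∀ (v : V) (w : G.Walk v v), w.IsCycle → w.length ≤ k) :
    ∀ (q : ℕ) (u v : V) (P Q : G.Walk u v), P.IsPath → Q.IsPath → Q.length = q →
      P.length ≤ q * (k - 1) := by
  intro q
  induction q using Nat.strong_induction_on with
  | _ q ih =>
  intro u v P Q hP hQ hq
  classical
  cases P with
  | nil => simp
  | @cons _ w _ h P' =>
    rw [Walk.cons_isPath_iff] at hP
    obtain ⟨hP', huP'⟩ := hP
    obtain ⟨x, hxQ, W1, W2, happ, hfirst⟩ := firstHit Q.support P' Q.end_mem_support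
    have hWW : (W1.append W2).IsPath := by rw [happ]; exact hP'
    have hW1 : W1.IsPath := hWW.of_append_left
    have hW2 : W2.IsPath := hWW.of_append_right
    have hxP' : x ∈ P'.support := by
      rw [← happ]
      exact Walk.subset_support_append_left _ _ W1.end_mem_support
    have hxu : x ≠ u := fun hh => huP' (hh ▸ hxP')
    set Q1 := Q.takeUntil x hxQ with hQ1def
    set Q2 := Q.dropUntil x hxQ with hQ2def
    have hQ1 : Q1.IsPath := hQ.takeUntil hxQ
    have hQ2 : Q2.IsPath := hQ.dropUntil hxQ
    have hr1 : 1 ≤ Q1.length := by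
      rcases Nat.eq_zero_or_pos Q1.length with h0 | h0
      · exact absurd (Walk.eq_of_length_eq_zero h0).symm hxu
      · exact h0
    have hlen : Q1.length + Q2.length = q := by
      have hsp := congrArg Walk.length (Q.take_spec hxQ)
      rw [Walk.length_append] at hsp
      rw [hQ1def, hQ2def]
      omega
    have hs : W1.length + 1 ≤ k - 1 := by
      by_cases hdeg : s(u, w) ∈ (W1.append Q1.reverse).edges
      · -- degenerate: the edge uw lies on Q1; then W1 is trivial
        rw [Walk.edges_append, List.mem_append] at hdeg
        rcases hdeg with hmem | hmem
        · exact absurd (Walk.fst_mem_support_of_mem_edges W1 hmem) (fun hh => huP'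
            (by rw [← happ]; exact Walk.subset_support_append_left _ _ hh))
        · rw [Walk.edges_reverse, List.mem_reverse] at hmem
          have hwQ : w ∈ Q.support :=
            Walk.support_takeUntil_subset _ _ (Walk.snd_mem_support_of_mem_edges Q1 hmem)
          have hwx : w = x := hfirst w W1.start_mem_support hwQ
          subst hwx
          have : W1.length = 0 := path_loop_length hW1
          omega
      · -- main case: we get a cycle
        have hTpath : (W1.append Q1.reverse).IsPath := by
          refine append_isPath hW1 hQ1.reverse ?_
          intro y hy1 hy2
          rw [Walk.support_reverse, List.mem_reverse] at hy2
          exact hfirst y hy1 (Walk.support_takeUntil_subset _ _ hy2)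
        have hcyc : (Walk.cons h (W1.append Q1.reverse)).IsCycle :=
          (Walk.cons_isCycle_iff _ h).mpr ⟨hTpath, hdeg⟩
        have hle := hcirc u _ hcyc
        rw [Walk.length_cons, Walk.length_append, Walk.length_reverse] at hle
        omega
    have hQ2lt : Q2.length < q := by omega
    have hIH : W2.length ≤ Q2.length * (k - 1) := ih Q2.length hQ2lt x v W2 Q2 hW2 hQ2 rfl
    have hPlen : P'.length = W1.length + W2.length := by
      rw [← happ, Walk.length_append]
    rw [Walk.length_cons]
    calc P'.length + 1 = (W1.length + 1) + W2.length := by omega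
      _ ≤ (k - 1) + Q2.length * (k - 1) := Nat.add_le_add hs hIH
      _ = (Q2.length + 1) * (k - 1) := by ring
      _ ≤ q * (k - 1) := Nat.mul_le_mul_right _ (by omega)

end DiracAux

/-- in a 2-connected graph of circumference at most `k`, every path has
fewer than `k²` vertices. -/
theorem stmt18 {V : Type*} [Fintype V] (k : ℕ) (G : SimpleGraph V)
    (h3 : 3 ≤ Fintype.card V) (hconn : G.Connected)
    (h2conn : ∀ v : V, (G.induce {v}ᶜ).Connected)
    (hcirc : ∀ (v : V) (w : G.Walk v v), w.IsCycle → w.length ≤ k) :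
    ∀ (u v : V) (p : G.Walk u v), p.IsPath → p.support.length < k ^ 2 := by
  classical
  intro u v p hp
  have hedge : ∃ (a b : V), G.Adj a b := by
    obtain ⟨a, b, hab⟩ := Fintype.exists_pair_of_one_lt_card (α := V) (by omega)
    obtain ⟨wk⟩ := hconn.preconnected a b
    obtain ⟨x, hx, _, _⟩ := SimpleGraph.Walk.exists_eq_cons_of_ne hab wk
    exact ⟨a, x, hx⟩
  obtain ⟨a, b, hab⟩ := hedge
  obtain ⟨C0, hC0, -⟩ := DiracAux.cycle_adj h3 h2conn hab
  have hk3 : 3 ≤ k := le_trans hC0.three_le_length (hcirc _ _ hC0)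
  rw [SimpleGraph.Walk.length_support]
  rcases Nat.eq_zero_or_pos p.length with h0 | hpos
  · have h9 : 3 ^ 2 ≤ k ^ 2 := Nat.pow_le_pow_left hk3 2
    have : (3 : ℕ) ^ 2 = 9 := by norm_num
    omega
  · have hne : u ≠ v := by
      intro hh
      subst hh
      have := DiracAux.path_loop_length hp
      omega
    obtain ⟨c, C, hC, huC, hvC⟩ := DiracAux.cycle_two h3 h2conn p.length u v p le_rfl hne
    set C' := C.rotate u huC with hC'def
    have hC' : C'.IsCycle := hC.rotate huC
    have hvC' : v ∈ C'.support := (DiracAux.mem_rotate hC huC v).mpr hvC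
    obtain ⟨hQ1, hQ2⟩ := DiracAux.arc_paths hC' hvC' hne.symm
    have hsplit := congrArg SimpleGraph.Walk.length (C'.take_spec hvC')
    rw [SimpleGraph.Walk.length_append] at hsplit
    have hlenC : C'.length ≤ k := hcirc u C' hC'
    have hd1 : 1 ≤ (C'.dropUntil v hvC').length := by
      rcases Nat.eq_zero_or_pos (C'.dropUntil v hvC').length with hz | hz
      · exact absurd (SimpleGraph.Walk.eq_of_length_eq_zero hz) hne.symm
      · exact hz
    have hQlen : (C'.takeUntil v hvC').length ≤ k - 1 := by omega
    have hbound := DiracAux.segment_bound k (by omega) hcirc (C'.takeUntil v hvC').length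
      u v p (C'.takeUntil v hvC') hp hQ1 rfl
    have h1 : p.length ≤ (k - 1) * (k - 1) :=
      le_trans hbound (Nat.mul_le_mul_right _ hQlen)
    have hexp : (k - 1) * (k - 1) + 2 * (k - 1) + 1 = k ^ 2 := by
      have hk1 : k - 1 + 1 = k := by omega
      calc (k-1)*(k-1) + 2*(k-1) + 1 = (k - 1 + 1) * (k - 1 + 1) := by ring
        _ = k * k := by rw [hk1]
        _ = k ^ 2 := by ring
    set m := (k - 1) * (k - 1) with hm
    set n := k ^ 2 with hn
    omega
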